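/- Characteristic function of the evolving categories multinomial (ECM) distribution: for every family of real numbers ξ = (ξ_{k,l})_{1≤k≤n, 1≤l≤m_k}, one has ∫_{P^N} exp( i · ∑_{k=1}^n ∑_{l=1}^{m_k} ξ_{k,l} · Q_{k,l}(ω) ) dμ^{⊗N}(ω) = ( ∑_{l_1=1}^{m_1} ⋯ ∑_{l_n=1}^{m_n} exp( i (ξ_{1,l_1} + ⋯ + ξ_{n,l_n}) ) · p_{l_1,…,l_n} )^N. -/

import Mathlib

open MeasureTheory

/-- Characteristic function of the evolving categories multinomial (ECM) distribution. -/
theorem ecm_characteristic_function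
    {n N : ℕ} (hn : 1 ≤ n) (hN : 1 ≤ N)
    {m : Fin n → ℕ} (hm : ∀ k, 1 ≤ m k)
    (μ : Measure (Π k : Fin n, Fin (m k))) [IsProbabilityMeasure μ]
    (ξ : Π k : Fin n, Fin (m k) → ℝ) :
    ∫ ω : Fin N → Π k : Fin n, Fin (m k),
        Complex.exp (Complex.I *
          ∑ k : Fin n, ∑ l : Fin (m k),
            (ξ k l : ℂ) * (Nat.card {j : Fin N // ω j k = l} : ℂ))
        ∂(Measure.pi fun _ : Fin N => μ)
      = (∑ x : Π k : Fin n, Fin (m k),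
          Complex.exp (Complex.I * ∑ k : Fin n, (ξ k (x k) : ℂ)) *
            ((μ {x}).toReal : ℂ)) ^ N := by
  classical
  have key : ∀ ω : Fin N → Π k : Fin n, Fin (m k),
      (∑ k : Fin n, ∑ l : Fin (m k),
        (ξ k l : ℂ) * (Nat.card {j : Fin N // ω j k = l} : ℂ))
      = ∑ j : Fin N, ∑ k : Fin n, (ξ k (ω j k) : ℂ) := by
    intro ω
    rw [Finset.sum_comm]
    refine Finset.sum_congr rfl fun k _ => ?_
    calc ∑ l : Fin (m k), (ξ k l : ℂ) * (Nat.card {j : Fin N // ω j k = l} : ℂ)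
        = ∑ l : Fin (m k), ∑ j ∈ Finset.univ.filter (fun j => ω j k = l),
            (ξ k (ω j k) : ℂ) := by
          refine Finset.sum_congr rfl fun l _ => ?_
          rw [Finset.sum_congr rfl (fun j hj => by
            rw [(Finset.mem_filter.mp hj).2] : ∀ j ∈ Finset.univ.filter
              (fun j => ω j k = l), (ξ k (ω j k) : ℂ) = (ξ k l : ℂ))]
          rw [Finset.sum_const, Nat.card_eq_fintype_card, Fintype.card_subtype,
            nsmul_eq_mul, mul_comm]
      _ = ∑ j : Fin N, (ξ k (ω j k) : ℂ) :=
          Finset.sum_fiberwise Finset.univ (fun j => ω j k) _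
  have h2 : ∀ ω : Fin N → Π k : Fin n, Fin (m k),
      Complex.exp (Complex.I * ∑ j : Fin N, ∑ k : Fin n, (ξ k (ω j k) : ℂ))
      = ∏ j : Fin N, Complex.exp (Complex.I * ∑ k : Fin n, (ξ k (ω j k) : ℂ)) := by
    intro ω
    rw [Finset.mul_sum, Complex.exp_sum]
  simp_rw [key, h2]
  letI : MeasureSpace (Π k : Fin n, Fin (m k)) := ⟨μ⟩
  have hpow := MeasureTheory.integral_fintype_prod_volume_eq_pow (𝕜 := ℂ) (ι := Fin N)
    (fun x : Π k : Fin n, Fin (m k) => Complex.exp (Complex.I * ∑ k, (ξ k (x k) : ℂ)))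
  simp only [Fintype.card_fin] at hpow
  rw [show (Measure.pi fun _ : Fin N => μ) = (volume : Measure (Fin N → Π k : Fin n, Fin (m k))) from rfl,
    hpow]
  congr 1
  rw [integral_fintype (.of_finite)]
  refine Finset.sum_congr rfl fun x _ => ?_
  rw [show (volume : Measure (Π k : Fin n, Fin (m k))) = μ from rfl, measureReal_def, Complex.real_smul, mul_comm]
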